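/- arXiv:1003.3067 — 2 statements merged into one kernel-verified Lean document; each statement's English description precedes it below -/
import Mathlib

section
/- Let N : X → Y be a compact injective bounded linear operator between Hilbert spaces with dense range, and let y ∈ Y be not in the range of N. Then for any sequence of Tikhonov-regularized solutions x_δ = (δ I + N* N)^{-1} N* y with δ → 0⁺, the norms ‖x_δ‖ tend to infinity. -/
open Filter
open RCLike

private theorem tikhonov_key {X Y : Type*} [NormedAddCommGroup X] [InnerProductSpace ℂ X]
    [NormedAddCommGroup Y] [InnerProductSpace ℂ Y] [CompleteSpace X] [CompleteSpace Y]
    (N : X →L[ℂ] Y)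
    (δ : ℕ → ℝ) (hδpos : ∀ j, 0 < δ j)
    (x : ℕ → X) (y : Y)
    (hx : ∀ j, (δ j : ℂ) • x j + N.adjoint (N (x j)) = N.adjoint y) :
    ∀ i j, δ i ≤ δ j → ‖x i - x j‖ ^ 2 ≤ ‖x i‖ ^ 2 - ‖x j‖ ^ 2 := by
  intro i j hij
  set d := x i - x j with hd
  have hAi : N.adjoint (N (x i)) = N.adjoint y - (δ i : ℂ) • x i := by
    rw [← hx i]; abel
  have hAj : N.adjoint (N (x j)) = N.adjoint y - (δ j : ℂ) • x j := by
    rw [← hx j]; abel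
  have heq : (δ i : ℂ) • d + N.adjoint (N d) = (((δ j - δ i : ℝ)) : ℂ) • x j := by
    push_cast
    simp only [hd, map_sub, smul_sub, sub_smul, hAi, hAj]
    abel
  have hinner : δ i * ‖d‖ ^ 2 + ‖N d‖ ^ 2 = (δ j - δ i) * re (inner ℂ (x j) d : ℂ) := by
    have h := congrArg (fun z => re (inner ℂ z d : ℂ)) heq
    simp only [inner_add_left, ContinuousLinearMap.adjoint_inner_left, map_add,
      inner_smul_left, Complex.conj_ofReal, RCLike.re_to_complex,
      Complex.re_ofReal_mul] at h
    have hdd := inner_self_eq_norm_sq (𝕜 := ℂ) d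
    have hNd := inner_self_eq_norm_sq (𝕜 := ℂ) (N d)
    simp only [RCLike.re_to_complex] at hdd hNd ⊢
    rw [← hdd, ← hNd]
    linarith [h]
  have hre : 0 ≤ re (inner ℂ (x j) d : ℂ) := by
    rcases eq_or_lt_of_le hij with h | h
    · have hd0 : d = 0 := by
        have h0 : δ i * ‖d‖ ^ 2 + ‖N d‖ ^ 2 = 0 := by rw [hinner, ← h]; ring
        have h1 : 0 ≤ δ i * ‖d‖ ^ 2 := mul_nonneg (hδpos i).le (sq_nonneg _)
        have h2 : 0 ≤ ‖N d‖ ^ 2 := sq_nonneg _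
        have h3 : δ i * ‖d‖ ^ 2 = 0 := by linarith
        have h4 := (mul_eq_zero.mp h3).resolve_left (ne_of_gt (hδpos i))
        simpa [pow_eq_zero_iff] using h4
      simp [hd0]
    · have hpos : 0 ≤ δ i * ‖d‖ ^ 2 + ‖N d‖ ^ 2 :=
        add_nonneg (mul_nonneg (hδpos i).le (sq_nonneg _)) (sq_nonneg _)
      nlinarith [hinner]
  have hexp : ‖d‖ ^ 2 = ‖x i‖ ^ 2 - 2 * re (inner ℂ (x i) (x j) : ℂ) + ‖x j‖ ^ 2 :=
    norm_sub_sq (𝕜 := ℂ) _ _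
  have hsym : re (inner ℂ (x j) d : ℂ) = re (inner ℂ (x i) (x j) : ℂ) - ‖x j‖ ^ 2 := by
    simp only [hd, inner_sub_right, map_sub, inner_self_eq_norm_sq]
    rw [inner_re_symm]
  nlinarith [hre, hsym, hexp]


/-- Blow-up of Tikhonov-regularized solutions: let `N : X → Y` be a compact,
injective bounded linear operator between complex Hilbert spaces with dense
range, and let `y ∉ range N`. If `δ_j → 0⁺` and `x_j` solves the regularized
normal equation `δ_j x_j + N* N x_j = N* y`, then `‖x_j‖ → ∞`. -/
theorem tikhonov_blowup
    {X Y : Type*} [NormedAddCommGroup X] [InnerProductSpace ℂ X] [CompleteSpace X]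
    [NormedAddCommGroup Y] [InnerProductSpace ℂ Y] [CompleteSpace Y]
    (N : X →L[ℂ] Y) (hcomp : IsCompactOperator N)
    (hinj : Function.Injective N) (hdense : DenseRange N)
    (y : Y) (hy : y ∉ Set.range N)
    (δ : ℕ → ℝ) (hδpos : ∀ j, 0 < δ j) (hδ : Tendsto δ atTop (nhds 0))
    (x : ℕ → X)
    (hx : ∀ j, (δ j : ℂ) • x j + N.adjoint (N (x j)) = N.adjoint y) :
    Tendsto (fun j => ‖x j‖) atTop atTop := by
  by_contra hcon
  rw [tendsto_atTop] at hcon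
  push_neg at hcon
  obtain ⟨b, hb⟩ := hcon
  obtain ⟨φ, hφmono, hφ⟩ := Filter.extraction_of_frequently_atTop hb
  have key := tikhonov_key N δ hδpos x y hx
  -- the subsequence is bounded
  set S : Set ℝ := Set.range (fun k => ‖x (φ k)‖ ^ 2) with hS
  have hSne : S.Nonempty := ⟨_, ⟨0, rfl⟩⟩
  have hSbdd : BddAbove S := by
    refine ⟨b ^ 2, ?_⟩
    rintro _ ⟨k, rfl⟩
    have h1 : ‖x (φ k)‖ < b := hφ k
    show ‖x (φ k)‖ ^ 2 ≤ b ^ 2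
    nlinarith [norm_nonneg (x (φ k))]
  set s : ℝ := sSup S with hs
  -- δ along the subsequence tends to 0
  have hδφ : Tendsto (fun k => δ (φ k)) atTop (nhds 0) :=
    hδ.comp hφmono.tendsto_atTop
  -- the subsequence is Cauchy
  have hcauchy : CauchySeq (fun k => x (φ k)) := by
    rw [Metric.cauchySeq_iff]
    intro ε hε
    obtain ⟨_, ⟨k0, rfl⟩, hk0⟩ :=
      exists_lt_of_lt_csSup hSne (show s - ε ^ 2 / 2 < s by nlinarith)
    obtain ⟨K, hK⟩ := (Filter.eventually_atTop).mp
      (hδφ.eventually_lt_const (hδpos (φ k0)))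
    refine ⟨K, fun m hm n hn => ?_⟩
    have hub : ∀ k, ‖x (φ k)‖ ^ 2 ≤ s := fun k => le_csSup hSbdd ⟨k, rfl⟩
    have hlb : ∀ k, K ≤ k → s - ε ^ 2 / 2 < ‖x (φ k)‖ ^ 2 := by
      intro k hk
      have h2 := key (φ k) (φ k0) (hK k hk).le
      have h3 := sq_nonneg ‖x (φ k) - x (φ k0)‖
      linarith [hk0]
    have hmain : ∀ p q, K ≤ p → K ≤ q → δ (φ p) ≤ δ (φ q) →
        dist (x (φ p)) (x (φ q)) < ε := by
      intro p q hp hq hpq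
      have h2 := key (φ p) (φ q) hpq
      have h4 : ‖x (φ p) - x (φ q)‖ ^ 2 < ε ^ 2 := by
        have := hub p
        have := hlb q hq
        nlinarith
      rw [dist_eq_norm]
      exact lt_of_pow_lt_pow_left₀ 2 hε.le h4
    rcases le_total (δ (φ m)) (δ (φ n)) with h | h
    · exact hmain m n hm hn h
    · rw [dist_comm]; exact hmain n m hn hm h
  obtain ⟨z, hz⟩ := cauchySeq_tendsto_of_complete hcauchy
  -- pass to the limit in the equation
  have hAz : N.adjoint (N z) = N.adjoint y := by
    have h1 : Tendsto (fun k => (δ (φ k) : ℂ) • x (φ k) + N.adjoint (N (x (φ k))))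
        atTop (nhds ((0 : ℂ) • z + N.adjoint (N z))) := by
      refine Tendsto.add ?_ ?_
      · exact Tendsto.smul (by
          simpa [Function.comp_def] using (Complex.continuous_ofReal.tendsto (0:ℝ)).comp hδφ) hz
      · exact ((N.adjoint.comp N).continuous.tendsto z).comp hz
    have h2 : Tendsto (fun _ : ℕ => N.adjoint y) atTop (nhds (N.adjoint y)) :=
      tendsto_const_nhds
    have h3 := tendsto_nhds_unique (by simpa only [hx] using h1) h2
    simpa using h3
  -- dense range forces N z = y
  have hv : N z - y = 0 := by
    have hAv : N.adjoint (N z - y) = 0 := by rw [map_sub, hAz, sub_self]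
    have horth : ∀ u : X, (inner ℂ (N z - y) (N u) : ℂ) = 0 := by
      intro u
      rw [← ContinuousLinearMap.adjoint_inner_left, hAv, inner_zero_left]
    have hfun : (fun w : Y => (inner ℂ (N z - y) w : ℂ)) = fun _ => (0 : ℂ) := by
      refine Continuous.ext_on hdense ?_ continuous_const ?_
      · exact continuous_const.inner continuous_id
      · rintro _ ⟨u, rfl⟩
        exact horth u
    have := congrFun hfun (N z - y)
    rwa [inner_self_eq_zero] at this
  exact hy ⟨z, by rwa [← sub_eq_zero]⟩
end

section
/- The difference G(x,y) − conj(G(y,x)) of the quasi-periodic Green function and the conjugate of its transpose, for y₃ = b fixed and x₃ < b, equals the finite sum over propagating modes (|αₙ| ≤ k) of (1/(8π² i βₙ))[exp(i(αₙ·(x'−y') − βₙ(y₃−x₃))) + exp(i(αₙ·(x'−y') + βₙ(y₃−x₃)))]. -/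
open Complex Real

/-- The difference `G(x,y) − conj(G(y,x))` of the quasi-periodic Green function
`G(x,y) = (1/(8π²)) ∑_n (1/(iβₙ)) exp(iαₙ·(x'−y') + iβₙ|x₃−y₃|)` and the
conjugate of its transpose, for `y₃ = b` and `x₃ < b`, equals the finite sum over
propagating modes `|αₙ| < k` of
`(1/(8π² i βₙ))[exp(i(αₙ·(x'−y') − βₙ(b−x₃))) + exp(i(αₙ·(x'−y') + βₙ(b−x₃)))]`. -/
theorem green_difference_propagating
    (k : ℝ) (hk : 0 < k) (α : ℝ × ℝ) (β : ℤ × ℤ → ℂ)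
    (hne : ∀ n : ℤ × ℤ, (α.1 + (n.1 : ℝ)) ^ 2 + (α.2 + (n.2 : ℝ)) ^ 2 ≠ k ^ 2)
    (hprop : ∀ n : ℤ × ℤ, (α.1 + (n.1 : ℝ)) ^ 2 + (α.2 + (n.2 : ℝ)) ^ 2 < k ^ 2 →
      (β n).im = 0 ∧ 0 < (β n).re)
    (hev : ∀ n : ℤ × ℤ, k ^ 2 < (α.1 + (n.1 : ℝ)) ^ 2 + (α.2 + (n.2 : ℝ)) ^ 2 →
      (β n).re = 0 ∧ 0 < (β n).im)
    (G : (ℝ × ℝ) × ℝ → (ℝ × ℝ) × ℝ → ℂ)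
    (hG : ∀ x y : (ℝ × ℝ) × ℝ, G x y = (1 / (8 * (π : ℂ) ^ 2)) *
      ∑' n : ℤ × ℤ, (1 / (Complex.I * β n)) *
        Complex.exp (Complex.I *
            (((α.1 + (n.1 : ℝ)) * (x.1.1 - y.1.1) + (α.2 + (n.2 : ℝ)) * (x.1.2 - y.1.2) : ℝ) : ℂ)
          + Complex.I * β n * ((|x.2 - y.2| : ℝ) : ℂ)))
    (b : ℝ) (x y : (ℝ × ℝ) × ℝ) (hx : x.2 < b) (hy : y.2 = b)
    (hsum1 : Summable (fun n : ℤ × ℤ => (1 / (Complex.I * β n)) *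
        Complex.exp (Complex.I *
            (((α.1 + (n.1 : ℝ)) * (x.1.1 - y.1.1) + (α.2 + (n.2 : ℝ)) * (x.1.2 - y.1.2) : ℝ) : ℂ)
          + Complex.I * β n * ((|x.2 - y.2| : ℝ) : ℂ))))
    (hsum2 : Summable (fun n : ℤ × ℤ => (1 / (Complex.I * β n)) *
        Complex.exp (Complex.I *
            (((α.1 + (n.1 : ℝ)) * (y.1.1 - x.1.1) + (α.2 + (n.2 : ℝ)) * (y.1.2 - x.1.2) : ℝ) : ℂ)
          + Complex.I * β n * ((|y.2 - x.2| : ℝ) : ℂ))))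
    (hfin : Set.Finite {n : ℤ × ℤ |
      (α.1 + (n.1 : ℝ)) ^ 2 + (α.2 + (n.2 : ℝ)) ^ 2 < k ^ 2}) :
    G x y - (starRingEnd ℂ) (G y x) =
      ∑ n ∈ hfin.toFinset, (1 / (8 * (π : ℂ) ^ 2 * Complex.I * β n)) *
        (Complex.exp (Complex.I *
              (((α.1 + (n.1 : ℝ)) * (x.1.1 - y.1.1) + (α.2 + (n.2 : ℝ)) * (x.1.2 - y.1.2) : ℝ) : ℂ)
            - Complex.I * β n * ((b - x.2 : ℝ) : ℂ)) +
         Complex.exp (Complex.I *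
              (((α.1 + (n.1 : ℝ)) * (x.1.1 - y.1.1) + (α.2 + (n.2 : ℝ)) * (x.1.2 - y.1.2) : ℝ) : ℂ)
            + Complex.I * β n * ((b - x.2 : ℝ) : ℂ))) := by
  have htpos : 0 < b - x.2 := sub_pos.2 hx
  have ht : |x.2 - y.2| = b - x.2 := by
    rw [hy, abs_sub_comm, abs_of_pos htpos]
  have ht' : |y.2 - x.2| = b - x.2 := by
    rw [hy, abs_of_pos htpos]
  set θ : ℤ × ℤ → ℝ := fun n =>
    (α.1 + (n.1 : ℝ)) * (x.1.1 - y.1.1) + (α.2 + (n.2 : ℝ)) * (x.1.2 - y.1.2) with hθ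
  have hflip : ∀ n : ℤ × ℤ,
      ((α.1 + (n.1 : ℝ)) * (y.1.1 - x.1.1) + (α.2 + (n.2 : ℝ)) * (y.1.2 - x.1.2)) = -θ n := by
    intro n; simp only [hθ]; ring
  set t : ℝ := b - x.2 with htdef
  set f : ℤ × ℤ → ℂ := fun n => (1 / (Complex.I * β n)) *
      Complex.exp (Complex.I * ((θ n : ℝ) : ℂ) + Complex.I * β n * ((t : ℝ) : ℂ)) with hfd
  set g : ℤ × ℤ → ℂ := fun n => (1 / (Complex.I * β n)) *
      Complex.exp (Complex.I * ((-θ n : ℝ) : ℂ) + Complex.I * β n * ((t : ℝ) : ℂ)) with hgd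
  have hGxy : G x y = (1 / (8 * (π : ℂ) ^ 2)) * ∑' n, f n := by
    rw [hG]
    simp only [ht, hfd, hθ]
  have hGyx : G y x = (1 / (8 * (π : ℂ) ^ 2)) * ∑' n, g n := by
    rw [hG]
    simp only [ht', hflip, hgd, hθ]
  have hsumf : Summable f := by
    have := hsum1
    simp only [ht] at this
    exact this
  have hsumg : Summable g := by
    have := hsum2
    simp only [ht', hflip] at this
    exact this
  have hsumcg : Summable (fun n => (starRingEnd ℂ) (g n)) :=
    hsumg.map (starRingEnd ℂ) Complex.continuous_conj
  have hconjc : (starRingEnd ℂ) (1 / (8 * (π : ℂ) ^ 2)) = 1 / (8 * (π : ℂ) ^ 2) := by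
    rw [map_div₀, map_one, map_mul, map_pow, Complex.conj_ofReal, map_ofNat]
  have hconjtsum : (starRingEnd ℂ) (∑' n, g n) = ∑' n, (starRingEnd ℂ) (g n) := by
    simp only [starRingEnd_apply]
    exact tsum_star
  have hmain : G x y - (starRingEnd ℂ) (G y x) =
      (1 / (8 * (π : ℂ) ^ 2)) * ∑' n, (f n - (starRingEnd ℂ) (g n)) := by
    rw [hGxy, hGyx, map_mul, hconjc, hconjtsum, Summable.tsum_sub hsumf hsumcg, mul_sub]
  rw [hmain]
  have hvanish : ∀ n : ℤ × ℤ, n ∉ hfin.toFinset → f n - (starRingEnd ℂ) (g n) = 0 := by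
    intro n hn
    rw [Set.Finite.mem_toFinset] at hn
    simp only [Set.mem_setOf_eq, not_lt] at hn
    have hgt : k ^ 2 < (α.1 + (n.1 : ℝ)) ^ 2 + (α.2 + (n.2 : ℝ)) ^ 2 :=
      lt_of_le_of_ne hn (Ne.symm (hne n))
    obtain ⟨hre, _⟩ := hev n hgt
    have hcb : (starRingEnd ℂ) (β n) = -β n := by
      apply Complex.ext <;> simp [hre]
    have e1 : (starRingEnd ℂ) (g n) = (1 / ((starRingEnd ℂ) (Complex.I * β n))) *
        Complex.exp ((starRingEnd ℂ)
          (Complex.I * ((-θ n : ℝ) : ℂ) + Complex.I * β n * ((t : ℝ) : ℂ))) := by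
      rw [hgd, map_mul, map_div₀, map_one, Complex.exp_conj]
    have e2 : (starRingEnd ℂ) (Complex.I * β n) = Complex.I * β n := by
      rw [map_mul, Complex.conj_I, hcb]; ring
    have e3 : (starRingEnd ℂ)
        (Complex.I * ((-θ n : ℝ) : ℂ) + Complex.I * β n * ((t : ℝ) : ℂ)) =
        Complex.I * ((θ n : ℝ) : ℂ) + Complex.I * β n * ((t : ℝ) : ℂ) := by
      rw [map_add, map_mul, map_mul, map_mul, Complex.conj_I, Complex.conj_ofReal,
        Complex.conj_ofReal, hcb]
      push_cast
      ring
    rw [e1, e2, e3, hfd, sub_self]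
  rw [tsum_eq_sum hvanish, Finset.mul_sum]
  refine Finset.sum_congr rfl ?_
  intro n hn
  rw [Set.Finite.mem_toFinset] at hn
  obtain ⟨him, hrepos⟩ := hprop n hn
  have hcb : (starRingEnd ℂ) (β n) = β n := Complex.conj_eq_iff_im.mpr him
  have e1 : (starRingEnd ℂ) (g n) = (1 / ((starRingEnd ℂ) (Complex.I * β n))) *
      Complex.exp ((starRingEnd ℂ)
        (Complex.I * ((-θ n : ℝ) : ℂ) + Complex.I * β n * ((t : ℝ) : ℂ))) := by
    rw [hgd, map_mul, map_div₀, map_one, Complex.exp_conj]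
  have e2 : (starRingEnd ℂ) (Complex.I * β n) = -(Complex.I * β n) := by
    rw [map_mul, Complex.conj_I, hcb]; ring
  have e3 : (starRingEnd ℂ)
      (Complex.I * ((-θ n : ℝ) : ℂ) + Complex.I * β n * ((t : ℝ) : ℂ)) =
      Complex.I * ((θ n : ℝ) : ℂ) - Complex.I * β n * ((t : ℝ) : ℂ) := by
    rw [map_add, map_mul, map_mul, map_mul, Complex.conj_I, Complex.conj_ofReal,
      Complex.conj_ofReal, hcb]
    push_cast
    ring
  have hconjg : (starRingEnd ℂ) (g n) = -((1 / (Complex.I * β n)) *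
      Complex.exp (Complex.I * ((θ n : ℝ) : ℂ) - Complex.I * β n * ((t : ℝ) : ℂ))) := by
    rw [e1, e2, e3, div_neg, neg_mul]
  rw [hconjg, hfd,
    show ((α.1 + (n.1 : ℝ)) * (x.1.1 - y.1.1) + (α.2 + (n.2 : ℝ)) * (x.1.2 - y.1.2) : ℝ)
      = θ n from rfl]
  ring
end
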